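/- With notation as in the Lawson reflection group G = ⟨(A,A),(B,I),(I,C)⟩ ⊂ O(4), every element of G admits a unique expression of the form (A,A)^i (B,I)^j (I,C)^ℓ with i ∈ {0,1}, 0 ≤ j ≤ k, 0 ≤ ℓ ≤ m. -/
import Mathlib

open Real Matrix

namespace Stmt10Aux

noncomputable def Rm (a : ℝ) : Matrix (Fin 2) (Fin 2) ℝ :=
  !![Real.cos a, -Real.sin a; Real.sin a, Real.cos a]

def Am : Matrix (Fin 2) (Fin 2) ℝ := !![-1, 0; 0, 1]

lemma R_mul (a b : ℝ) : Rm a * Rm b = Rm (a + b) := by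
  simp only [Rm]
  rw [show (!![Real.cos a, -Real.sin a; Real.sin a, Real.cos a] : Matrix (Fin 2) (Fin 2) ℝ) *
    !![Real.cos b, -Real.sin b; Real.sin b, Real.cos b] = _ from Matrix.mul_fin_two ..]
  rw [Real.cos_add, Real.sin_add]; ring_nf

lemma R_zero : Rm 0 = 1 := by
  simp [Rm, Matrix.one_fin_two]

lemma R_pow (a : ℝ) (n : ℕ) : Rm a ^ n = Rm (n * a) := by
  induction n with
  | zero => simp [R_zero]
  | succ n ih => rw [pow_succ, ih, R_mul]; push_cast; ring_nf

lemma A_mul_A : Am * Am = 1 := by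
  simp [Am, Matrix.mul_fin_two, Matrix.one_fin_two]

lemma A_R_A (a : ℝ) : Am * Rm a * Am = Rm (-a) := by
  simp [Am, Rm, Matrix.mul_fin_two]

lemma det_R (a : ℝ) : (Rm a).det = 1 := by
  simp only [Rm, Matrix.det_fin_two_of]; nlinarith [Real.cos_sq_add_sin_sq a]

lemma det_A : Am.det = -1 := by simp [Am, Matrix.det_fin_two_of]

lemma R_two_pi : Rm (2*π) = 1 := by simp [Rm, Matrix.one_fin_two]

lemma R_inj' (k j j' : ℕ) (hj : j ≤ k) (hj' : j' ≤ k)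
    (h : Rm (j * (2*π/(k+1))) = Rm (j' * (2*π/(k+1)))) : j = j' := by
  have hc : Real.cos ((j:ℝ) * (2*π/(k+1))) = Real.cos ((j':ℝ) * (2*π/(k+1))) := by
    have := congrFun (congrFun h 0) 0; simpa [Rm] using this
  have hs : Real.sin ((j:ℝ) * (2*π/(k+1))) = Real.sin ((j':ℝ) * (2*π/(k+1))) := by
    have := congrFun (congrFun h 1) 0; simpa [Rm] using this
  obtain ⟨n, hn⟩ := Real.Angle.angle_eq_iff_two_pi_dvd_sub.mp (Real.Angle.cos_sin_inj hc hs)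
  have hk1 : ((k:ℝ)+1) ≠ 0 := by positivity
  have hπ : (π:ℝ) ≠ 0 := Real.pi_ne_zero
  have key : ((j:ℝ) - j') = n*((k:ℝ)+1) := by
    field_simp at hn
    nlinarith [Real.pi_pos, hn]
  have key' : (j:ℤ) - j' = n * ((k:ℤ)+1) := by exact_mod_cast key
  have hj2 : (j:ℤ) ≤ k := by exact_mod_cast hj
  have hj2' : (j':ℤ) ≤ k := by exact_mod_cast hj'
  have hn0 : n = 0 := by nlinarith [key', hj2, hj2']
  rw [hn0] at key'; simp at key'; omega

noncomputable def blkM (X Y : Matrix (Fin 2) (Fin 2) ℝ) : Matrix (Fin 4) (Fin 4) ℝ :=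
  Matrix.reindex finSumFinEquiv finSumFinEquiv (Matrix.fromBlocks X 0 0 Y)

lemma blk_mul (X Y X' Y' : Matrix (Fin 2) (Fin 2) ℝ) :
    blkM X Y * blkM X' Y' = blkM (X * X') (Y * Y') := by
  simp only [blkM, Matrix.reindex_apply, Matrix.submatrix_mul_equiv, Matrix.fromBlocks_multiply]
  congr 1 <;> simp

lemma blk_one : blkM 1 1 = 1 := by
  simp only [blkM, Matrix.fromBlocks_one, Matrix.reindex_apply, Matrix.submatrix_one_equiv]

lemma blk_pow (X Y : Matrix (Fin 2) (Fin 2) ℝ) (n : ℕ) :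
    blkM X Y ^ n = blkM (X ^ n) (Y ^ n) := by
  induction n with
  | zero => simp [blk_one]
  | succ n ih => rw [pow_succ, ih, blk_mul, ← pow_succ, ← pow_succ]

lemma blk_inj {X Y X' Y' : Matrix (Fin 2) (Fin 2) ℝ} (h : blkM X Y = blkM X' Y') :
    X = X' ∧ Y = Y' := by
  have h2 : Matrix.fromBlocks X 0 0 Y = Matrix.fromBlocks X' 0 0 Y' :=
    (Matrix.reindex finSumFinEquiv finSumFinEquiv).injective h
  constructor
  · have := congrArg Matrix.toBlocks₁₁ h2; simpa using this
  · have := congrArg Matrix.toBlocks₂₂ h2; simpa using this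

end Stmt10Aux

open Stmt10Aux

/-- Every element of the Lawson reflection group `G = ⟨(A,A),(B,I),(I,C)⟩ ⊂ O(4)`
admits a unique expression `(A,A)^i (B,I)^j (I,C)^ℓ` with `i ∈ {0,1}`, `0 ≤ j ≤ k`,
`0 ≤ ℓ ≤ m`. -/
theorem stmt10 (m k : ℕ) (hm : 1 ≤ m) (hk : 1 ≤ k) (gAA gBI gIC : GL (Fin 4) ℝ) :
    let A : Matrix (Fin 2) (Fin 2) ℝ := !![-1, 0; 0, 1]
    let R : ℝ → Matrix (Fin 2) (Fin 2) ℝ :=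
      fun a => !![Real.cos a, -Real.sin a; Real.sin a, Real.cos a]
    let B : Matrix (Fin 2) (Fin 2) ℝ := R (2 * π / (k + 1))
    let C : Matrix (Fin 2) (Fin 2) ℝ := R (2 * π / (m + 1))
    let blk : Matrix (Fin 2) (Fin 2) ℝ → Matrix (Fin 2) (Fin 2) ℝ →
        Matrix (Fin 4) (Fin 4) ℝ :=
      fun X Y => Matrix.reindex finSumFinEquiv finSumFinEquiv (Matrix.fromBlocks X 0 0 Y)
    (gAA : Matrix (Fin 4) (Fin 4) ℝ) = blk A A →
    (gBI : Matrix (Fin 4) (Fin 4) ℝ) = blk B 1 →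
    (gIC : Matrix (Fin 4) (Fin 4) ℝ) = blk 1 C →
    ∀ g ∈ Subgroup.closure {gAA, gBI, gIC},
      ∃! t : Fin 2 × Fin (k + 1) × Fin (m + 1),
        g = gAA ^ (t.1 : ℕ) * gBI ^ (t.2.1 : ℕ) * gIC ^ (t.2.2 : ℕ) := by
  intro A R B C blk hA0 hB0 hC0 g hg
  have hA' : (gAA : Matrix (Fin 4) (Fin 4) ℝ) = blkM Am Am := hA0
  have hB' : (gBI : Matrix (Fin 4) (Fin 4) ℝ) = blkM (Rm (2*π/((k:ℝ)+1))) 1 := hB0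
  have hC' : (gIC : Matrix (Fin 4) (Fin 4) ℝ) = blkM 1 (Rm (2*π/((m:ℝ)+1))) := hC0
  -- matrix value of a normal form word
  have hval : ∀ i j l : ℕ, ((gAA ^ i * gBI ^ j * gIC ^ l : GL (Fin 4) ℝ) : Matrix (Fin 4) (Fin 4) ℝ)
      = blkM (Am ^ i * Rm ((j:ℝ) * (2*π/((k:ℝ)+1)))) (Am ^ i * Rm ((l:ℝ) * (2*π/((m:ℝ)+1)))) := by
    intro i j l
    simp only [Units.val_mul, Units.val_pow_eq_pow_val, hA', hB', hC', blk_pow, blk_mul,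
      one_pow, R_pow, mul_one, one_mul]
  -- relations
  have vAA : gAA * gAA = 1 := Units.ext (by
    rw [Units.val_mul, hA', blk_mul, A_mul_A, blk_one, Units.val_one])
  have hAA2 : gAA ^ 2 = 1 := by rw [sq]; exact vAA
  have hBord : gBI ^ (k+1) = 1 := Units.ext (by
    rw [Units.val_pow_eq_pow_val, hB', blk_pow, one_pow, R_pow, Units.val_one,
      show ((k+1:ℕ):ℝ) * (2*π/((k:ℝ)+1)) = 2*π by
        have : ((k:ℝ)+1) ≠ 0 := by positivity
        push_cast; field_simp,
      R_two_pi, blk_one])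
  have hCord : gIC ^ (m+1) = 1 := Units.ext (by
    rw [Units.val_pow_eq_pow_val, hC', blk_pow, one_pow, R_pow, Units.val_one,
      show ((m+1:ℕ):ℝ) * (2*π/((m:ℝ)+1)) = 2*π by
        have : ((m:ℝ)+1) ≠ 0 := by positivity
        push_cast; field_simp,
      R_two_pi, blk_one])
  have hcomm : gBI * gIC = gIC * gBI := Units.ext (by
    rw [Units.val_mul, Units.val_mul, hB', hC', blk_mul, blk_mul, one_mul, mul_one, one_mul, mul_one])
  have hconjBraw : gAA * gBI * gAA * gBI = 1 := Units.ext (by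
    rw [Units.val_mul, Units.val_mul, Units.val_mul, hA', hB', blk_mul, blk_mul, blk_mul,
      Units.val_one, mul_one, mul_one, A_R_A, R_mul, A_mul_A]
    norm_num [R_zero, blk_one])
  have hconjCraw : gAA * gIC * gAA * gIC = 1 := Units.ext (by
    rw [Units.val_mul, Units.val_mul, Units.val_mul, hA', hC', blk_mul, blk_mul, blk_mul,
      Units.val_one, mul_one, mul_one, A_R_A, R_mul, A_mul_A]
    norm_num [R_zero, blk_one])
  have hAinv : gAA⁻¹ = gAA := inv_eq_of_mul_eq_one_right vAA
  have hBinv : gBI⁻¹ = gBI ^ k := by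
    symm; apply eq_inv_of_mul_eq_one_right
    rw [← pow_succ']; exact hBord
  have hCinv : gIC⁻¹ = gIC ^ m := by
    symm; apply eq_inv_of_mul_eq_one_right
    rw [← pow_succ']; exact hCord
  have hconjB : gAA * gBI * gAA = gBI⁻¹ := eq_inv_of_mul_eq_one_left hconjBraw
  have hconjC : gAA * gIC * gAA = gIC⁻¹ := eq_inv_of_mul_eq_one_left hconjCraw
  -- moving gAA across powers
  have moveB : ∀ j : ℕ, gBI ^ j * gAA = gAA * gBI ^ (j*k) := by
    intro j
    have h2 : gAA * gBI ^ j * gAA = gBI ^ (j*k) := by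
      have hcp : (gAA * gBI * gAA⁻¹) ^ j = gAA * gBI ^ j * gAA⁻¹ := conj_pow
      rw [hAinv, hconjB] at hcp
      rw [← hcp, hBinv, ← pow_mul, Nat.mul_comm]
    calc gBI ^ j * gAA = (gAA * gAA) * (gBI ^ j * gAA) := by rw [vAA, one_mul]
      _ = gAA * (gAA * gBI ^ j * gAA) := by simp only [mul_assoc]
      _ = gAA * gBI ^ (j*k) := by rw [h2]
  have moveC : ∀ l : ℕ, gIC ^ l * gAA = gAA * gIC ^ (l*m) := by
    intro l
    have h2 : gAA * gIC ^ l * gAA = gIC ^ (l*m) := by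
      have hcp : (gAA * gIC * gAA⁻¹) ^ l = gAA * gIC ^ l * gAA⁻¹ := conj_pow
      rw [hAinv, hconjC] at hcp
      rw [← hcp, hCinv, ← pow_mul, Nat.mul_comm]
    calc gIC ^ l * gAA = (gAA * gAA) * (gIC ^ l * gAA) := by rw [vAA, one_mul]
      _ = gAA * (gAA * gIC ^ l * gAA) := by simp only [mul_assoc]
      _ = gAA * gIC ^ (l*m) := by rw [h2]
  have hcp : ∀ a b : ℕ, gBI ^ a * gIC ^ b = gIC ^ b * gBI ^ a := fun a b =>
    (show Commute gBI gIC from hcomm).pow_pow a b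
  have step : ∀ a b : ℕ, (gBI ^ a * gIC ^ b) * gAA = gAA * (gBI ^ (a*k) * gIC ^ (b*m)) := by
    intro a b
    calc (gBI ^ a * gIC ^ b) * gAA = gBI ^ a * (gIC ^ b * gAA) := mul_assoc _ _ _
      _ = gBI ^ a * (gAA * gIC ^ (b*m)) := by rw [moveC b]
      _ = (gBI ^ a * gAA) * gIC ^ (b*m) := (mul_assoc _ _ _).symm
      _ = (gAA * gBI ^ (a*k)) * gIC ^ (b*m) := by rw [moveB a]
      _ = gAA * (gBI ^ (a*k) * gIC ^ (b*m)) := mul_assoc _ _ _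
  have moveD : ∀ n j l : ℕ, (gBI ^ j * gIC ^ l) * gAA ^ n
      = gAA ^ n * (gBI ^ (j*k^n) * gIC ^ (l*m^n)) := by
    intro n
    induction n with
    | zero => intro j l; simp
    | succ n ih =>
      intro j l
      calc (gBI ^ j * gIC ^ l) * gAA ^ (n+1)
          = ((gBI ^ j * gIC ^ l) * gAA) * gAA ^ n := by rw [pow_succ']; simp only [mul_assoc]
        _ = gAA * ((gBI ^ (j*k) * gIC ^ (l*m)) * gAA ^ n) := by rw [step]; simp only [mul_assoc]
        _ = gAA * (gAA ^ n * (gBI ^ (j*k*k^n) * gIC ^ (l*m*m^n))) := by rw [ih]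
        _ = gAA ^ (n+1) * (gBI ^ (j*k^(n+1)) * gIC ^ (l*m^(n+1))) := by
            rw [pow_succ']
            simp only [mul_assoc]
            congr 2 <;> ring_nf
  -- closure under multiplication
  have mulclosed : ∀ i j l i' j' l' : ℕ,
      (gAA ^ i * gBI ^ j * gIC ^ l) * (gAA ^ i' * gBI ^ j' * gIC ^ l')
      = gAA ^ (i+i') * gBI ^ (j*k^i' + j') * gIC ^ (l*m^i' + l') := by
    intro i j l i' j' l'
    calc (gAA ^ i * gBI ^ j * gIC ^ l) * (gAA ^ i' * gBI ^ j' * gIC ^ l')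
        = gAA ^ i * (((gBI ^ j * gIC ^ l) * gAA ^ i') * (gBI ^ j' * gIC ^ l')) := by
          simp only [mul_assoc]
      _ = gAA ^ i * ((gAA ^ i' * (gBI ^ (j*k^i') * gIC ^ (l*m^i'))) * (gBI ^ j' * gIC ^ l')) := by
          rw [moveD]
      _ = (gAA ^ i * gAA ^ i') * (gBI ^ (j*k^i') * ((gIC ^ (l*m^i') * gBI ^ j') * gIC ^ l')) := by
          simp only [mul_assoc]
      _ = (gAA ^ i * gAA ^ i') * (gBI ^ (j*k^i') * ((gBI ^ j' * gIC ^ (l*m^i')) * gIC ^ l')) := by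
          rw [← hcp j' (l*m^i')]
      _ = gAA ^ (i+i') * gBI ^ (j*k^i' + j') * gIC ^ (l*m^i' + l') := by
          rw [pow_add, pow_add, pow_add]; simp only [mul_assoc]
  -- closure under inverse
  have invclosed : ∀ i j l : ℕ, (gAA ^ i * gBI ^ j * gIC ^ l)⁻¹
      = gAA ^ i * gBI ^ (k*j*k^i) * gIC ^ (m*l*m^i) := by
    intro i j l
    rw [_root_.mul_inv_rev, _root_.mul_inv_rev, ← inv_pow, ← inv_pow, ← inv_pow, hAinv, hBinv, hCinv,
      ← pow_mul, ← pow_mul]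
    calc gIC ^ (m*l) * (gBI ^ (k*j) * gAA ^ i)
        = (gIC ^ (m*l) * gBI ^ (k*j)) * gAA ^ i := (mul_assoc _ _ _).symm
      _ = (gBI ^ (k*j) * gIC ^ (m*l)) * gAA ^ i := by rw [← hcp (k*j) (m*l)]
      _ = gAA ^ i * (gBI ^ (k*j*k^i) * gIC ^ (m*l*m^i)) := moveD i (k*j) (m*l)
      _ = gAA ^ i * gBI ^ (k*j*k^i) * gIC ^ (m*l*m^i) := (mul_assoc _ _ _).symm
  -- existence of an (unbounded) representation
  have hexists : ∃ i j l : ℕ, g = gAA ^ i * gBI ^ j * gIC ^ l := by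
    induction hg using Subgroup.closure_induction with
    | mem x hx =>
      simp only [Set.mem_insert_iff, Set.mem_singleton_iff] at hx
      rcases hx with rfl | rfl | rfl
      · exact ⟨1, 0, 0, by simp⟩
      · exact ⟨0, 1, 0, by simp⟩
      · exact ⟨0, 0, 1, by simp⟩
    | one => exact ⟨0, 0, 0, by simp⟩
    | mul x y hx hy ihx ihy =>
      obtain ⟨i, j, l, rfl⟩ := ihx
      obtain ⟨i', j', l', rfl⟩ := ihy
      exact ⟨i+i', j*k^i'+j', l*m^i'+l', mulclosed i j l i' j' l'⟩
    | inv x hx ihx =>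
      obtain ⟨i, j, l, rfl⟩ := ihx
      exact ⟨i, k*j*k^i, m*l*m^i, invclosed i j l⟩
  obtain ⟨i, j, l, hg'⟩ := hexists
  rw [pow_eq_pow_mod i hAA2, pow_eq_pow_mod j hBord, pow_eq_pow_mod l hCord] at hg'
  -- injectivity of the normal form on bounded exponents
  have inj : ∀ i j l i' j' l' : ℕ, i < 2 → i' < 2 → j ≤ k → j' ≤ k → l ≤ m → l' ≤ m →
      gAA ^ i * gBI ^ j * gIC ^ l = gAA ^ i' * gBI ^ j' * gIC ^ l' →
      i = i' ∧ j = j' ∧ l = l' := by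
    intro i j l i' j' l' hi hi' hjk hjk' hlm hlm' heq
    have hval2 := congrArg (Units.val) heq
    rw [hval, hval] at hval2
    obtain ⟨e1, e2⟩ := blk_inj hval2
    have hdet := congrArg Matrix.det e1
    rw [Matrix.det_mul, Matrix.det_mul, Matrix.det_pow, Matrix.det_pow, det_A, det_R, det_R,
      mul_one, mul_one] at hdet
    have hii : i = i' := by
      interval_cases i <;> interval_cases i' <;> norm_num at hdet <;> rfl
    subst hii
    have hAmi : Am ^ i * Am ^ i = 1 := by
      rw [← pow_add, show i + i = 2*i by ring, pow_mul, show Am^2 = 1 by rw [sq]; exact A_mul_A,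
        one_pow]
    have eB : Rm ((j:ℝ) * (2*π/((k:ℝ)+1))) = Rm ((j':ℝ) * (2*π/((k:ℝ)+1))) := by
      have := congrArg (fun M => Am ^ i * M) e1
      simpa only [← mul_assoc, hAmi, one_mul] using this
    have eC : Rm ((l:ℝ) * (2*π/((m:ℝ)+1))) = Rm ((l':ℝ) * (2*π/((m:ℝ)+1))) := by
      have := congrArg (fun M => Am ^ i * M) e2
      simpa only [← mul_assoc, hAmi, one_mul] using this
    exact ⟨rfl, R_inj' k j j' hjk hjk' eB, R_inj' m l l' hlm hlm' eC⟩
  refine ⟨⟨⟨i % 2, Nat.mod_lt _ (by norm_num)⟩, ⟨j % (k+1), Nat.mod_lt _ (by omega)⟩,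
    ⟨l % (m+1), Nat.mod_lt _ (by omega)⟩⟩, hg', ?_⟩
  rintro ⟨⟨i', hi'⟩, ⟨j', hj'⟩, ⟨l', hl'⟩⟩ ht'
  have heq : gAA ^ i' * gBI ^ j' * gIC ^ l'
      = gAA ^ (i % 2) * gBI ^ (j % (k+1)) * gIC ^ (l % (m+1)) := by
    rw [← ht']; exact hg'
  obtain ⟨h1, h2, h3⟩ := inj i' j' l' (i % 2) (j % (k+1)) (l % (m+1)) hi'
    (Nat.mod_lt _ (by norm_num)) (by omega) (Nat.le_of_lt_succ (Nat.mod_lt _ (Nat.succ_pos _)))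
    (by omega) (Nat.le_of_lt_succ (Nat.mod_lt _ (Nat.succ_pos _))) heq
  simp only [Prod.mk.injEq, Fin.mk.injEq]
  exact ⟨h1, h2, h3⟩
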